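/- arXiv:2011.14820 — 2 statements merged into one kernel-verified Lean document; each statement's English description precedes it below -/
import Mathlib

section
/- There exists a continuous surjective map from the closed unit interval [0,1] onto the closed unit square [0,1] × [0,1]. -/
open scoped BigOperators
open Filter Topology

noncomputable section SFC

/-- digit value times `c^(n+1)` -/
def bseq (c : ℝ) (v : ℝ) (x : ℕ → Bool) (n : ℕ) : ℝ := (cond (x n) v 0) * c ^ (n + 1)

lemma bseq_nonneg {c v : ℝ} (hc : 0 ≤ c) (hv : 0 ≤ v) (x : ℕ → Bool) (n : ℕ) :
    0 ≤ bseq c v x n := by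
  unfold bseq; cases x n <;> simp <;> positivity

lemma bseq_le {c v : ℝ} (hc : 0 ≤ c) (hv : 0 ≤ v) (x : ℕ → Bool) (n : ℕ) :
    bseq c v x n ≤ v * c ^ (n + 1) := by
  unfold bseq; cases x n <;> simp <;> positivity

lemma summable_bound {c v : ℝ} (hc0 : 0 ≤ c) (hc1 : c < 1) :
    Summable (fun n : ℕ => v * c ^ (n + 1)) := by
  have : Summable (fun n : ℕ => c ^ n) := summable_geometric_of_lt_one hc0 hc1
  simpa [pow_succ, mul_comm, mul_assoc, mul_left_comm] using (this.mul_left (v * c))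

lemma summable_bseq {c v : ℝ} (hc0 : 0 ≤ c) (hc1 : c < 1) (hv : 0 ≤ v) (x : ℕ → Bool) :
    Summable (bseq c v x) := by
  refine (summable_bound (v := v) hc0 hc1).of_nonneg_of_le (bseq_nonneg hc0 hv x)
    (bseq_le hc0 hv x)

lemma tsum_bound {c v : ℝ} (hc0 : 0 ≤ c) (hc1 : c < 1) :
    ∑' n : ℕ, v * c ^ (n + 1) = v * c / (1 - c) := by
  have h : ∑' n : ℕ, c ^ n = (1 - c)⁻¹ := tsum_geometric_of_lt_one hc0 hc1
  calc ∑' n : ℕ, v * c ^ (n + 1) = ∑' n : ℕ, (v * c) * c ^ n := by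
        congr 1; funext n; ring
    _ = (v * c) * (1 - c)⁻¹ := by rw [tsum_mul_left, h]
    _ = v * c / (1 - c) := by ring

def bmap (c v : ℝ) (x : ℕ → Bool) : ℝ := ∑' n, bseq c v x n

lemma bmap_nonneg {c v : ℝ} (hc : 0 ≤ c) (hv : 0 ≤ v) (x : ℕ → Bool) :
    0 ≤ bmap c v x :=
  tsum_nonneg (bseq_nonneg hc hv x)

lemma bmap_le {c v : ℝ} (hc0 : 0 ≤ c) (hc1 : c < 1) (hv : 0 ≤ v) (x : ℕ → Bool) :
    bmap c v x ≤ v * c / (1 - c) := by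
  rw [← tsum_bound hc0 hc1]
  exact Summable.tsum_le_tsum (bseq_le hc0 hv x) (summable_bseq hc0 hc1 hv x) (summable_bound hc0 hc1)

lemma continuous_bmap {c v : ℝ} (hc0 : 0 ≤ c) (hc1 : c < 1) (hv : 0 ≤ v) :
    Continuous (bmap c v) := by
  refine continuous_tsum (fun n => ?_) (summable_bound (v := v) hc0 hc1) (fun n x => ?_)
  · exact ((continuous_of_discreteTopology (f := fun b : Bool => (cond b v 0 : ℝ))).comp
      (continuous_apply n)).mul continuous_const
  · have h1 := bseq_nonneg hc0 hv x n
    have h2 := bseq_le hc0 hv x n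
    rw [Real.norm_eq_abs, abs_of_nonneg h1]; exact h2

/-! ### Surjectivity of the binary map onto [0,1] -/

open Classical in
/-- remainders in the greedy binary expansion -/
def rem (y : ℝ) : ℕ → ℝ
  | 0 => y
  | n + 1 => if (1/2 : ℝ) ^ (n + 1) ≤ rem y n then rem y n - (1/2) ^ (n + 1) else rem y n

open Classical in
def dig (y : ℝ) (n : ℕ) : Bool := if (1/2 : ℝ) ^ (n + 1) ≤ rem y n then true else false

lemma rem_mem {y : ℝ} (hy : y ∈ Set.Icc (0:ℝ) 1) (n : ℕ) :
    0 ≤ rem y n ∧ rem y n ≤ (1/2) ^ n := by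
  induction n with
  | zero => simpa [rem] using hy
  | succ n ih =>
    rw [rem]
    split_ifs with h
    · constructor
      · linarith
      · have : (1/2:ℝ)^n = 2 * (1/2)^(n+1) := by ring
        rw [this] at ih; linarith [ih.2]
    · exact ⟨ih.1, le_of_not_ge h⟩

lemma sum_dig (y : ℝ) (n : ℕ) :
    ∑ k ∈ Finset.range n, bseq (1/2) 1 (dig y) k = y - rem y n := by
  induction n with
  | zero => simp [rem]
  | succ n ih =>
    rw [Finset.sum_range_succ, ih, bseq, dig, rem]
    split_ifs with h <;> simp <;> ring

lemma bmap_dig {y : ℝ} (hy : y ∈ Set.Icc (0:ℝ) 1) : bmap (1/2) 1 (dig y) = y := by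
  have hs : Summable (bseq (1/2) 1 (dig y)) :=
    summable_bseq (by norm_num) (by norm_num) (by norm_num) _
  have h1 : Tendsto (fun n => ∑ k ∈ Finset.range n, bseq (1/2) 1 (dig y) k)
      atTop (𝓝 (bmap (1/2) 1 (dig y))) := hs.hasSum.tendsto_sum_nat
  have h2 : Tendsto (fun n => ∑ k ∈ Finset.range n, bseq (1/2) 1 (dig y) k) atTop (𝓝 y) := by
    have hrem : Tendsto (fun n => rem y n) atTop (𝓝 0) := by
      have hpow : Tendsto (fun n : ℕ => ((1:ℝ)/2) ^ n) atTop (𝓝 0) :=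
        tendsto_pow_atTop_nhds_zero_of_lt_one (by norm_num) (by norm_num)
      exact squeeze_zero (fun n => (rem_mem hy n).1) (fun n => (rem_mem hy n).2) hpow
    have : Tendsto (fun n => y - rem y n) atTop (𝓝 (y - 0)) :=
      tendsto_const_nhds.sub hrem
    simpa only [← sum_dig y, sub_zero] using this
  exact tendsto_nhds_unique h1 h2

/-! ### Injectivity of the ternary map -/

lemma emap_lt {x y : ℕ → Bool} {n : ℕ} (hlt : ∀ k < n, x k = y k)
    (hx : x n = true) (hy : y n = false) : bmap (1/3) 2 y < bmap (1/3) 2 x := by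
  have hsx : Summable (bseq (1/3) 2 x) :=
    summable_bseq (by norm_num) (by norm_num) (by norm_num) _
  have hsy : Summable (bseq (1/3) 2 y) :=
    summable_bseq (by norm_num) (by norm_num) (by norm_num) _
  have hx' := Summable.sum_add_tsum_nat_add (f := bseq (1/3) 2 x) (n + 1) hsx
  have hy' := Summable.sum_add_tsum_nat_add (f := bseq (1/3) 2 y) (n + 1) hsy
  have hsum_eq : ∑ k ∈ Finset.range (n+1), bseq (1/3) 2 x k
      = ∑ k ∈ Finset.range (n+1), bseq (1/3) 2 y k + 2 * (1/3)^(n+1) := by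
    rw [Finset.sum_range_succ, Finset.sum_range_succ]
    have : ∀ k ∈ Finset.range n, bseq (1/3) 2 x k = bseq (1/3) 2 y k := by
      intro k hk; unfold bseq; rw [hlt k (Finset.mem_range.mp hk)]
    rw [Finset.sum_congr rfl this]
    unfold bseq; rw [hx, hy]; simp only [cond_true, cond_false]; ring
  -- tail bounds
  have tail_bound : ∀ z : ℕ → Bool, ∑' k, bseq (1/3) 2 z (k + (n+1)) ≤ (1/3)^(n+1) ∧
      0 ≤ ∑' k, bseq (1/3) 2 z (k + (n+1)) := by
    intro z
    have hsz : Summable (fun k => bseq (1/3) 2 z (k + (n+1))) :=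
      (summable_bseq (by norm_num) (by norm_num) (by norm_num) z).comp_injective
        (add_left_injective (n+1))
    constructor
    · have hb : Summable (fun k : ℕ => (2:ℝ) * (1/3) ^ (k + (n+1) + 1)) := by
        have := (summable_bound (c := (1/3:ℝ)) (v := (2:ℝ) * (1/3)^(n+1)) (by norm_num)
          (by norm_num))
        refine this.congr fun k => ?_
        ring
      have : ∑' k, bseq (1/3) 2 z (k + (n+1)) ≤ ∑' k : ℕ, (2:ℝ) * (1/3) ^ (k + (n+1) + 1) := by
        refine Summable.tsum_le_tsum (fun k => bseq_le (by norm_num) (by norm_num) z _) hsz hb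
      refine this.trans ?_
      have : ∑' k : ℕ, (2:ℝ) * (1/3) ^ (k + (n+1) + 1)
          = ∑' k : ℕ, ((2:ℝ) * (1/3)^(n+1)) * (1/3) ^ (k + 1) := by
        congr 1; funext k; ring
      rw [this, tsum_bound (by norm_num) (by norm_num)]
      rw [show ((2:ℝ) * (1/3)^(n+1)) * (1/3) / (1 - 1/3) = (1/3)^(n+1) by ring]
    · exact tsum_nonneg fun k => bseq_nonneg (by norm_num) (by norm_num) z _
  have hxtail := tail_bound x
  have hytail := tail_bound y
  unfold bmap
  rw [← hx', ← hy', hsum_eq]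
  have h13 : (0:ℝ) < (1/3)^(n+1) := by positivity
  linarith [hxtail.2, hytail.1]

lemma emap_injective : Function.Injective (bmap (1/3) 2) := by
  intro x y hxy
  by_contra hne
  have hex : ∃ n, x n ≠ y n := by
    by_contra h
    push_neg at h
    exact hne (funext h)
  classical
  let n := Nat.find hex
  have hn : x n ≠ y n := Nat.find_spec hex
  have hlt : ∀ k < n, x k = y k := fun k hk => by
    by_contra h; exact absurd hk (not_lt.mpr (Nat.find_le h))
  cases hxn : x n <;> cases hyn : y n
  · exact hn (hxn.trans hyn.symm)
  · exact absurd hxy (ne_of_lt (emap_lt (fun k hk => (hlt k hk).symm) hyn hxn))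
  · exact absurd hxy (ne_of_gt (emap_lt hlt hxn hyn))
  · exact hn (hxn.trans hyn.symm)

end SFC

/-- There exists a continuous surjective map from the closed unit interval `[0,1]`
onto the closed unit square `[0,1] × [0,1]` (a space-filling curve). -/
theorem space_filling_curve_exists :
    ∃ f : Set.Icc (0 : ℝ) 1 → Set.Icc (0 : ℝ) 1 × Set.Icc (0 : ℝ) 1,
      Continuous f ∧ Function.Surjective f := by
  classical
  -- the ternary Cantor embedding
  set e : (ℕ → Bool) → ℝ := bmap (1/3) 2 with he
  have hec : Continuous e := continuous_bmap (by norm_num) (by norm_num) (by norm_num)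
  have hce : IsClosedEmbedding e := hec.isClosedEmbedding emap_injective
  -- the two coordinate functions on Cantor space
  have hbc : Continuous (bmap (1/2) 1) :=
    continuous_bmap (by norm_num) (by norm_num) (by norm_num)
  let f1 : C((ℕ → Bool), ℝ) := ⟨fun x => bmap (1/2) 1 (fun n => x (2 * n)),
    hbc.comp (continuous_pi fun n => continuous_apply (2 * n))⟩
  let f2 : C((ℕ → Bool), ℝ) := ⟨fun x => bmap (1/2) 1 (fun n => x (2 * n + 1)),
    hbc.comp (continuous_pi fun n => continuous_apply (2 * n + 1))⟩
  have hf1 : ∀ x, f1 x ∈ Set.Icc (0:ℝ) 1 := by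
    intro x
    constructor
    · exact bmap_nonneg (by norm_num) (by norm_num) _
    · have := bmap_le (c := 1/2) (v := 1) (by norm_num) (by norm_num) (by norm_num)
        (fun n => x (2 * n))
      exact this.trans_eq (by norm_num)
  have hf2 : ∀ x, f2 x ∈ Set.Icc (0:ℝ) 1 := by
    intro x
    constructor
    · exact bmap_nonneg (by norm_num) (by norm_num) _
    · have := bmap_le (c := 1/2) (v := 1) (by norm_num) (by norm_num) (by norm_num)
        (fun n => x (2 * n + 1))
      exact this.trans_eq (by norm_num)
  obtain ⟨g1, hg1mem, hg1⟩ := f1.exists_extension_forall_mem_of_isClosedEmbedding hf1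
    ⟨0, by norm_num⟩ hce
  obtain ⟨g2, hg2mem, hg2⟩ := f2.exists_extension_forall_mem_of_isClosedEmbedding hf2
    ⟨0, by norm_num⟩ hce
  refine ⟨fun t => (⟨g1 t, hg1mem t⟩, ⟨g2 t, hg2mem t⟩), ?_, ?_⟩
  · exact ((g1.continuous.comp continuous_subtype_val).subtype_mk _).prodMk
      ((g2.continuous.comp continuous_subtype_val).subtype_mk _)
  · rintro ⟨⟨y1, hy1⟩, ⟨y2, hy2⟩⟩
    -- interleave the digits
    set z : ℕ → Bool := fun n => if n % 2 = 0 then dig y1 (n / 2) else dig y2 (n / 2) with hz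
    have hz1 : (fun n => z (2 * n)) = dig y1 := by
      funext n; simp [hz, Nat.mul_mod_right, Nat.mul_div_cancel_left n (by norm_num : 0 < 2)]
    have hz2 : (fun n => z (2 * n + 1)) = dig y2 := by
      funext n
      have h1 : (2 * n + 1) % 2 = 1 := by omega
      have h2 : (2 * n + 1) / 2 = n := by omega
      simp [hz, h1, h2]
    have hin : e z ∈ Set.Icc (0:ℝ) 1 := by
      constructor
      · exact bmap_nonneg (by norm_num) (by norm_num) _
      · have := bmap_le (c := 1/3) (v := 2) (by norm_num) (by norm_num) (by norm_num) z
        refine this.trans ?_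
        norm_num
    refine ⟨⟨e z, hin⟩, ?_⟩
    have e1 : g1 (e z) = y1 := by
      have := congrFun hg1 z
      simp only [Function.comp_apply] at this
      rw [this]
      show f1 z = y1
      simp only [f1, ContinuousMap.coe_mk]
      rw [hz1, bmap_dig ⟨hy1.1, hy1.2⟩]
    have e2 : g2 (e z) = y2 := by
      have := congrFun hg2 z
      simp only [Function.comp_apply] at this
      rw [this]
      show f2 z = y2
      simp only [f2, ContinuousMap.coe_mk]
      rw [hz2, bmap_dig ⟨hy2.1, hy2.2⟩]
    simp only [Prod.mk.injEq, Subtype.mk.injEq]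
    exact ⟨e1, e2⟩
end

section
/- If f : [0,1] → [0,1]² is a surjection that is Hölder continuous with exponent α, then α ≤ 1/2. -/
open Set ENNReal NNReal

lemma abs_apply_le_norm (y : EuclideanSpace ℝ (Fin 2)) (i : Fin 2) : |y i| ≤ ‖y‖ := by
  rw [EuclideanSpace.norm_eq]
  have h : |y i| = Real.sqrt (|y i| ^ 2) := by
    rw [Real.sqrt_sq (abs_nonneg _)]
  rw [h]
  apply Real.sqrt_le_sqrt
  exact Finset.single_le_sum (f := fun j => |y j| ^ 2) (fun j _ => by positivity)
    (Finset.mem_univ i)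

lemma abs_sub_apply_le_dist (y z : EuclideanSpace ℝ (Fin 2)) (i : Fin 2) :
    |y i - z i| ≤ dist y z := by
  have := abs_apply_le_norm (y - z) i
  rwa [PiLp.sub_apply, ← dist_eq_norm] at this

/-- If `f : [0,1] → [0,1]²` is surjective onto the unit square and Hölder continuous
with exponent `α > 0`, then `α ≤ 1/2`. -/
theorem holder_exponent_le_half
    (f : ℝ → EuclideanSpace ℝ (Fin 2)) (α C : ℝ) (hα : 0 < α) (hC : 0 ≤ C)
    (hHolder : ∀ s ∈ Set.Icc (0 : ℝ) 1, ∀ t ∈ Set.Icc (0 : ℝ) 1,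
      ‖f s - f t‖ ≤ C * |s - t| ^ α)
    (hsurj : ∀ y : EuclideanSpace ℝ (Fin 2),
      y 0 ∈ Set.Icc (0 : ℝ) 1 → y 1 ∈ Set.Icc (0 : ℝ) 1 →
        ∃ s ∈ Set.Icc (0 : ℝ) 1, f s = y) :
    α ≤ 1 / 2 := by
  set r : ℝ≥0 := ⟨α, hα.le⟩ with hr
  set C' : ℝ≥0 := ⟨C, hC⟩ with hC'
  have hrα : (r : ℝ) = α := rfl
  have hofr : ENNReal.ofReal α = (r : ℝ≥0∞) := by
    simp [hr, ENNReal.ofReal, Real.toNNReal, max_eq_left hα.le]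
    rfl
  have hofC : ENNReal.ofReal C = (C' : ℝ≥0∞) := by
    simp [hC', ENNReal.ofReal, Real.toNNReal, max_eq_left hC]
    rfl
  have hH : HolderOnWith C' r f (Set.Icc 0 1) := by
    intro x hx y hy
    rw [edist_dist, edist_dist]
    calc ENNReal.ofReal (dist (f x) (f y)) ≤ ENNReal.ofReal (C * |x - y| ^ α) := by
          apply ENNReal.ofReal_le_ofReal
          rw [dist_eq_norm]; exact hHolder x hx y hy
      _ = (C' : ℝ≥0∞) * ENNReal.ofReal (dist x y) ^ (r : ℝ) := by
          rw [ENNReal.ofReal_mul hC, ← ENNReal.ofReal_rpow_of_nonneg (abs_nonneg _) hα.le,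
            hofC, hrα, Real.dist_eq]
  set S : Set (EuclideanSpace ℝ (Fin 2)) :=
    {y | y 0 ∈ Set.Icc (0:ℝ) 1 ∧ y 1 ∈ Set.Icc (0:ℝ) 1} with hS
  have hsub : S ⊆ f '' Set.Icc 0 1 := by
    rintro y ⟨h0, h1⟩
    obtain ⟨s, hs, hfs⟩ := hsurj y h0 h1
    exact ⟨s, hs, hfs⟩
  set c : EuclideanSpace ℝ (Fin 2) := WithLp.toLp 2 (fun _ => (1/2 : ℝ)) with hc
  have hnhds : S ∈ nhds c := by
    have hb : Metric.ball c (1/2) ⊆ S := by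
      intro y hy
      rw [Metric.mem_ball] at hy
      have h0 := abs_lt.mp ((abs_sub_apply_le_dist y c 0).trans_lt hy)
      have h1 := abs_lt.mp ((abs_sub_apply_le_dist y c 1).trans_lt hy)
      have hc0 : c 0 = 1/2 := rfl
      have hc1 : c 1 = 1/2 := rfl
      rw [hc0] at h0; rw [hc1] at h1
      exact ⟨⟨by linarith [h0.1], by linarith [h0.2]⟩,
             ⟨by linarith [h1.1], by linarith [h1.2]⟩⟩
    exact Filter.mem_of_superset (Metric.ball_mem_nhds _ (by norm_num)) hb
  have hdimS : dimH S = 2 := by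
    rw [Real.dimH_of_mem_nhds hnhds, finrank_euclideanSpace_fin]
    norm_num
  have hdimIcc : dimH (Set.Icc (0:ℝ) 1) = 1 := by
    have hmem : Set.Icc (0:ℝ) 1 ∈ nhds (1/2 : ℝ) := by
      apply _root_.Icc_mem_nhds <;> norm_num
    rw [Real.dimH_of_mem_nhds hmem]
    simp
  have key : (2 : ℝ≥0∞) ≤ 1 / r := by
    calc (2 : ℝ≥0∞) = dimH S := hdimS.symm
      _ ≤ dimH (f '' Set.Icc 0 1) := dimH_mono hsub
      _ ≤ dimH (Set.Icc (0:ℝ) 1) / r := hH.dimH_image_le (by exact_mod_cast hα)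
      _ = 1 / r := by rw [hdimIcc]
  by_contra hcon
  push_neg at hcon
  have hr2 : (1 : ℝ≥0∞) / r < 2 := by
    have hrne : (r : ℝ≥0∞) ≠ 0 := by
      simp only [ne_eq, ENNReal.coe_eq_zero]
      intro h
      exact hα.ne' (congrArg NNReal.toReal h)
    rw [ENNReal.div_lt_iff (Or.inl hrne) (Or.inl ENNReal.coe_ne_top)]
    calc (1 : ℝ≥0∞) = ENNReal.ofReal 1 := by simp
      _ < ENNReal.ofReal (2 * α) := by
          apply (ENNReal.ofReal_lt_ofReal_iff_of_nonneg (by norm_num)).mpr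
          linarith
      _ = 2 * r := by
          rw [ENNReal.ofReal_mul (by norm_num), hofr]
          norm_num
  exact absurd (key.trans_lt hr2) (lt_irrefl _)
end
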